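/- Let φ be an unbounded integer-valued lscsm on ℕ with φ({x}) = 1 for all x. Then for every integer k ≥ 2 there is a finite set B ⊆ ℕ with φ(B) = k such that φ(C) < k for every proper subset C of B. -/
import Mathlib


open scoped ENNReal

/-- A lower semicontinuous submeasure on ℕ. -/
def IsLSCSM (φ : Set ℕ → ℝ≥0∞) : Prop :=
  φ ∅ = 0 ∧ (∀ A B : Set ℕ, A ⊆ B → φ A ≤ φ B) ∧
    (∀ A B : Set ℕ, φ (A ∪ B) ≤ φ A + φ B) ∧
    (∀ n : ℕ, φ {n} < ⊤) ∧
    (∀ A : Set ℕ, φ A = ⨆ n : ℕ, φ (A ∩ Set.Iic n))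

/-- φ is integer-valued (values in ℕ ∪ (∞)) and unbounded (φ(ℕ) = ∞). -/
def IsIntegerValuedUnbounded (φ : Set ℕ → ℝ≥0∞) : Prop :=
  (∀ A : Set ℕ, φ A = ⊤ ∨ ∃ k : ℕ, φ A = k) ∧ φ Set.univ = ⊤

theorem stmt1 (φ : Set ℕ → ℝ≥0∞) (hφ : IsLSCSM φ)
    (hint : IsIntegerValuedUnbounded φ) (hsing : ∀ x : ℕ, φ {x} = 1) :
    ∀ k : ℕ, 2 ≤ k → ∃ B : Finset ℕ, φ ↑B = k ∧ ∀ C : Finset ℕ, C ⊂ B → φ ↑C < k := by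
  classical
  obtain ⟨h0, hmono, hsub, hfin, hlsc⟩ := hφ
  intro k hk
  -- finite sets have finite measure
  have hfinset : ∀ S : Finset ℕ, φ ↑S < ⊤ := by
    intro S
    induction S using Finset.induction with
    | empty => simp [h0]
    | @insert a S ha ih =>
      have : φ ↑(insert a S) ≤ φ {a} + φ ↑S := by
        have h := hsub {a} ↑S
        have hcoe : (↑(insert a S) : Set ℕ) = {a} ∪ ↑S := by
          rw [Finset.coe_insert, Set.insert_eq]
        rw [hcoe]; exact h
      refine lt_of_le_of_lt this ?_
      rw [hsing a]
      exact ENNReal.add_lt_top.2 ⟨by simp, ih⟩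
  -- g n : ℕ value of φ on Iic n
  have hg : ∀ n : ℕ, ∃ m : ℕ, φ ↑(Finset.Iic n) = m := by
    intro n
    rcases hint.1 ↑(Finset.Iic n) with h | h
    · exact absurd h (hfinset _).ne
    · exact h
  choose g hgspec using hg
  -- g 0 = 1
  have hg0 : g 0 = 1 := by
    have : φ ↑(Finset.Iic 0) = 1 := by
      have : (Finset.Iic 0 : Finset ℕ) = {0} := rfl
      rw [this]; simpa using hsing 0
    have := (hgspec 0).symm.trans this
    exact_mod_cast this
  -- step: g (n+1) ≤ g n + 1
  have hstep : ∀ n, g (n + 1) ≤ g n + 1 := by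
    intro n
    have hset : (↑(Finset.Iic (n + 1)) : Set ℕ) = ↑(Finset.Iic n) ∪ {n + 1} := by
      ext x
      simp [Nat.lt_succ_iff, Nat.le_succ_iff]
      omega
    have := hsub ↑(Finset.Iic n) {n + 1}
    rw [← hset, hgspec (n + 1), hgspec n, hsing (n + 1)] at this
    have : (g (n + 1) : ℝ≥0∞) ≤ ((g n + 1 : ℕ) : ℝ≥0∞) := by
      push_cast
      exact this
    exact_mod_cast this
  -- unboundedness: ∀ m, ∃ n, m ≤ g n
  have hunb : ∀ m : ℕ, ∃ n, m ≤ g n := by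
    intro m
    have h1 : (⨆ n : ℕ, φ (Set.univ ∩ Set.Iic n)) = ⊤ := by
      rw [← hlsc Set.univ]; exact hint.2
    have h2 : (m : ℝ≥0∞) < ⨆ n : ℕ, φ (Set.univ ∩ Set.Iic n) := by
      rw [h1]; exact ENNReal.natCast_lt_top m
    obtain ⟨n, hn⟩ := lt_iSup_iff.mp h2
    refine ⟨n, ?_⟩
    have hcoe : (Set.univ ∩ Set.Iic n : Set ℕ) = ↑(Finset.Iic n) := by
      simp
    rw [hcoe, hgspec n] at hn
    exact_mod_cast hn.le
  -- find n with g n = k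
  have hexk : ∃ n, g n = k := by
    have hex : ∃ n, k ≤ g n := hunb k
    obtain ⟨n, hn, hmin⟩ : ∃ n, k ≤ g n ∧ ∀ m < n, ¬ k ≤ g m :=
      ⟨Nat.find hex, Nat.find_spec hex, fun m hm => Nat.find_min hex hm⟩
    match n, hn, hmin with
    | 0, hn, _ => exact absurd (hg0 ▸ hn) (by omega)
    | (m + 1), hn, hmin =>
      have h1 : ¬ k ≤ g m := hmin m (Nat.lt_succ_self m)
      have h2 := hstep m
      exact ⟨m + 1, by omega⟩
  obtain ⟨n, hn⟩ := hexk
  -- minimal cardinality finset with φ = k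
  have hP : ∃ m : ℕ, ∃ B : Finset ℕ, B.card = m ∧ φ ↑B = (k : ℝ≥0∞) := by
    exact ⟨(Finset.Iic n).card, Finset.Iic n, rfl, by rw [hgspec n, hn]⟩
  set P : ℕ → Prop := fun m => ∃ B : Finset ℕ, B.card = m ∧ φ ↑B = (k : ℝ≥0∞) with hPdef
  have hPex : ∃ m, P m := hP
  obtain ⟨B, hBcard, hBval⟩ := Nat.find_spec hPex
  refine ⟨B, hBval, ?_⟩
  intro C hC
  have hCle : φ ↑C ≤ (k : ℝ≥0∞) := hBval ▸ hmono _ _ (by exact_mod_cast hC.subset)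
  rcases hint.1 ↑C with h | ⟨j, hj⟩
  · rw [h] at hCle
    exact absurd (top_le_iff.mp hCle) (by simp [ENNReal.natCast_ne_top])
  · rw [hj] at hCle ⊢
    have hjk : j ≤ k := by exact_mod_cast hCle
    rcases eq_or_lt_of_le hjk with heq | hlt
    · exfalso
      have hCcard : C.card < B.card := Finset.card_lt_card hC
      have : P C.card := ⟨C, rfl, by rw [hj, heq]⟩
      exact Nat.find_min hPex (hBcard ▸ hCcard) this
    · exact_mod_cast hlt
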